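/- arXiv:2503.11996 — 2 statements merged into one kernel-verified Lean document; each statement's English description precedes it below -/
import Mathlib

section
/- Let G be a finite simple graph with no isolated vertex. If D is the unique minimum paired-dominating set of G, then every minimum ev-dominating set M of G satisfies V_G(M) = D. -/
open SimpleGraph

variable {V : Type*}

/-- `D` is a dominating set of `G`: every vertex outside `D` has a neighbor in `D`. -/
def IsDomSet (G : SimpleGraph V) (D : Set V) : Prop :=
  ∀ v ∉ D, ∃ u ∈ D, G.Adj u v

/-- The edge `e` ev-dominates the vertex `v`: `e` is incident to `v` or to a neighbor of `v`. -/
def EvDom (G : SimpleGraph V) (e : Sym2 V) (v : V) : Prop :=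
  v ∈ e ∨ ∃ u ∈ e, G.Adj u v

/-- `M` is an edge-vertex dominating set of `G`. -/
def IsEvDomSet (G : SimpleGraph V) (M : Set (Sym2 V)) : Prop :=
  M ⊆ G.edgeSet ∧ ∀ v : V, ∃ e ∈ M, EvDom G e v

/-- `M` is a minimum edge-vertex dominating set of `G`. -/
def IsMinEvDomSet (G : SimpleGraph V) (M : Set (Sym2 V)) : Prop :=
  IsEvDomSet G M ∧ ∀ M' : Set (Sym2 V), IsEvDomSet G M' → M.ncard ≤ M'.ncard

/-- The edge-vertex domination number `γ_ev(G)`. -/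
noncomputable def evNum (G : SimpleGraph V) : ℕ :=
  sInf {n | ∃ M : Set (Sym2 V), IsEvDomSet G M ∧ M.ncard = n}

/-- The set of all endpoints of edges in `M`. -/
def edgeVerts (M : Set (Sym2 V)) : Set V := {v | ∃ e ∈ M, v ∈ e}

/-- `M` is a perfect matching of the induced subgraph `G[D]`: a set of edges of `G`
with all endpoints in `D`, such that every vertex of `D` lies in exactly one edge of `M`. -/
def IsPMOn (G : SimpleGraph V) (D : Set V) (M : Set (Sym2 V)) : Prop :=
  M ⊆ G.edgeSet ∧ (∀ e ∈ M, ∀ v ∈ e, v ∈ D) ∧ ∀ v ∈ D, ∃! e, e ∈ M ∧ v ∈ e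

/-- `D` is a paired-dominating set of `G`. -/
def IsPairedDomSet (G : SimpleGraph V) (D : Set V) : Prop :=
  IsDomSet G D ∧ ∃ M : Set (Sym2 V), IsPMOn G D M

/-- `D` is a minimum paired-dominating set of `G`. -/
def IsMinPairedDomSet (G : SimpleGraph V) (D : Set V) : Prop :=
  IsPairedDomSet G D ∧ ∀ D' : Set V, IsPairedDomSet G D' → D.ncard ≤ D'.ncard

/-- The paired-domination number `γ_pr(G)`. -/
noncomputable def prNum (G : SimpleGraph V) : ℕ :=
  sInf {n | ∃ D : Set V, IsPairedDomSet G D ∧ D.ncard = n}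

/-- No two distinct edges of `M` share a vertex. -/
def NoSharedVertex (M : Set (Sym2 V)) : Prop :=
  ∀ e ∈ M, ∀ f ∈ M, e ≠ f → ∀ v : V, v ∈ e → v ∉ f

/-- `G` has no isolated vertex. -/
def NoIsolated (G : SimpleGraph V) : Prop := ∀ v : V, ∃ u, G.Adj u v

/-! ### Auxiliary machinery -/

/-- `g` shares a vertex with another edge of `M`. -/
def Shares (M : Set (Sym2 V)) (g : Sym2 V) : Prop :=
  ∃ h ∈ M, h ≠ g ∧ ∃ v, v ∈ g ∧ v ∈ h

/-- `a` belongs to two distinct edges of `M`. -/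
def SharedV (M : Set (Sym2 V)) (a : V) : Prop :=
  ∃ g ∈ M, ∃ h ∈ M, g ≠ h ∧ a ∈ g ∧ a ∈ h

lemma evdom_of_near {G : SimpleGraph V} {h : Sym2 V} {a z : V}
    (ha : a ∈ h) (hz : z = a ∨ G.Adj a z) : EvDom G h z := by
  rcases hz with rfl | hz
  · exact Or.inl ha
  · exact Or.inr ⟨a, ha, hz⟩

/-- Every edge of a minimum ev-dominating set privately dominates some vertex. -/
lemma exists_private [Fintype V] {G : SimpleGraph V} {M : Set (Sym2 V)}
    (hM : IsMinEvDomSet G M) {g : Sym2 V} (hg : g ∈ M) :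
    ∃ y, EvDom G g y ∧ ∀ h ∈ M, h ≠ g → ¬EvDom G h y := by
  by_contra hcon
  push_neg at hcon
  have hsub : IsEvDomSet G (M \ {g}) := by
    refine ⟨fun e he => hM.1.1 he.1, fun v => ?_⟩
    obtain ⟨e, heM, hev⟩ := hM.1.2 v
    by_cases heg : e = g
    · subst heg
      obtain ⟨h, hhM, hhg, hhev⟩ := hcon v hev
      exact ⟨h, ⟨hhM, hhg⟩, hhev⟩
    · exact ⟨e, ⟨heM, heg⟩, hev⟩
  have hlt : (M \ {g}).ncard < M.ncard :=
    Set.ncard_diff_singleton_lt_of_mem hg (Set.toFinite M)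
  exact absurd (hM.2 _ hsub) (by omega)

/-- Good data for shared edges: `g = s(A g, B g)`, `A g` the shared endpoint,
`B g` private, `Y g` a private vertex adjacent to `B g`. -/
def GoodData (G : SimpleGraph V) (M : Set (Sym2 V)) (A B Y : Sym2 V → V) : Prop :=
  ∀ g ∈ M, Shares M g →
    g = s(A g, B g) ∧
    (∀ h ∈ M, h ≠ g → B g ∉ h) ∧
    G.Adj (B g) (Y g) ∧
    Y g ∉ edgeVerts M ∧
    (∀ h ∈ M, h ≠ g → ¬EvDom G h (Y g)) ∧
    SharedV M (A g)

lemma gooddata_core {G : SimpleGraph V} {M : Set (Sym2 V)}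
    (hMe : M ⊆ G.edgeSet) {a b y : V} {h0 : Sym2 V}
    (hgM : s(a,b) ∈ M) (hh0M : h0 ∈ M) (hh0ne : h0 ≠ s(a,b)) (hah0 : a ∈ h0)
    (hyev : EvDom G s(a,b) y) (hypriv : ∀ h ∈ M, h ≠ s(a,b) → ¬EvDom G h y) :
    G.Adj b y ∧ y ∉ edgeVerts M ∧ SharedV M a := by
  have hadj : G.Adj a b := (G.mem_edgeSet).1 (hMe hgM)
  have hyNa : ¬(y = a ∨ G.Adj a y) := fun h =>
    hypriv h0 hh0M hh0ne (evdom_of_near hah0 h)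
  have hyb : y ≠ b := by
    rintro rfl
    exact hyNa (Or.inr hadj)
  have hAdjby : G.Adj b y := by
    rcases hyev with hy | ⟨u, hu, huy⟩
    · rcases Sym2.mem_iff.1 hy with rfl | rfl
      · exact absurd (Or.inl rfl) hyNa
      · exact absurd rfl hyb
    · rcases Sym2.mem_iff.1 hu with rfl | rfl
      · exact absurd (Or.inr huy) hyNa
      · exact huy
  refine ⟨hAdjby, ?_, s(a,b), hgM, h0, hh0M, Ne.symm hh0ne, Sym2.mem_mk_left a b, hah0⟩
  rintro ⟨e, heM, hye⟩
  by_cases hne : e = s(a,b)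
  · subst hne
    rcases Sym2.mem_iff.1 hye with rfl | rfl
    · exact hyNa (Or.inl rfl)
    · exact hyb rfl
  · exact hypriv e heM hne (Or.inl hye)

lemma exists_gooddata [Fintype V] {G : SimpleGraph V} {M : Set (Sym2 V)}
    (hM : IsMinEvDomSet G M) : ∃ A B Y : Sym2 V → V, GoodData G M A B Y := by
  have key : ∀ g : Sym2 V, ∃ p : V × V × V, g ∈ M → Shares M g →
      g = s(p.1, p.2.1) ∧
      (∀ h ∈ M, h ≠ g → p.2.1 ∉ h) ∧
      G.Adj p.2.1 p.2.2 ∧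
      p.2.2 ∉ edgeVerts M ∧
      (∀ h ∈ M, h ≠ g → ¬EvDom G h p.2.2) ∧
      SharedV M p.1 := by
    intro g
    induction g using Sym2.ind with
    | _ a b =>
      by_cases hg : s(a,b) ∈ M ∧ Shares M s(a,b)
      · obtain ⟨hgM, hsh⟩ := hg
        obtain ⟨y, hyev, hypriv⟩ := exists_private hM hgM
        obtain ⟨h0, hh0M, hh0ne, v, hvg, hvh⟩ := hsh
        have hnotboth : ¬((∃ h ∈ M, h ≠ s(a,b) ∧ a ∈ h) ∧
            (∃ h ∈ M, h ≠ s(a,b) ∧ b ∈ h)) := by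
          rintro ⟨⟨h1, hh1M, hh1ne, hah1⟩, ⟨h2, hh2M, hh2ne, hbh2⟩⟩
          rcases hyev with hy | ⟨u, hu, huy⟩
          · rcases Sym2.mem_iff.1 hy with rfl | rfl
            · exact hypriv h1 hh1M hh1ne (Or.inl hah1)
            · exact hypriv h2 hh2M hh2ne (Or.inl hbh2)
          · rcases Sym2.mem_iff.1 hu with rfl | rfl
            · exact hypriv h1 hh1M hh1ne (Or.inr ⟨u, hah1, huy⟩)
            · exact hypriv h2 hh2M hh2ne (Or.inr ⟨u, hbh2, huy⟩)
        rcases Sym2.mem_iff.1 hvg with rfl | rfl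
        · -- a is shared
          obtain ⟨hAdjby, hyout, hshA⟩ :=
            gooddata_core hM.1.1 hgM hh0M hh0ne hvh hyev hypriv
          refine ⟨(v, b, y), fun _ _ => ⟨rfl, ?_, hAdjby, hyout, hypriv, hshA⟩⟩
          intro h hhM hhne hbh
          exact hnotboth ⟨⟨h0, hh0M, hh0ne, hvh⟩, ⟨h, hhM, hhne, hbh⟩⟩
        · -- b is shared
          have hswap : s(a, v) = s(v, a) := Sym2.eq_swap
          have hgM' : s(v, a) ∈ M := hswap ▸ hgM
          have hh0ne' : h0 ≠ s(v, a) := fun h => hh0ne (by rw [h, ← hswap])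
          have hyev' : EvDom G s(v, a) y := by rwa [← hswap]
          have hypriv' : ∀ h ∈ M, h ≠ s(v, a) → ¬EvDom G h y := by
            intro h hhM hne
            exact hypriv h hhM (fun he => hne (by rw [he, hswap]))
          obtain ⟨hAdjay, hyout, hshB⟩ :=
            gooddata_core hM.1.1 hgM' hh0M hh0ne' hvh hyev' hypriv'
          refine ⟨(v, a, y), fun _ _ => ⟨hswap, ?_, hAdjay, hyout, hypriv, hshB⟩⟩
          intro h hhM hhne hah
          exact hnotboth ⟨⟨h, hhM, hhne, hah⟩, ⟨h0, hh0M, hh0ne, hvh⟩⟩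
      · exact ⟨(a, a, a), fun h1 h2 => absurd ⟨h1, h2⟩ hg⟩
  choose F hF using key
  exact ⟨fun g => (F g).1, fun g => (F g).2.1, fun g => (F g).2.2,
    fun g hg hsh => hF g hg hsh⟩

/- The transformed edge set: replace each non-representative shared edge `g`
by the edge from `B g` to its private vertex `Y g`. -/
open Classical in
noncomputable def transf (M : Set (Sym2 V)) (A B Y : Sym2 V → V)
    (rep : V → Sym2 V) : Set (Sym2 V) :=
  (fun g => if g ∈ M ∧ Shares M g ∧ rep (A g) ≠ g then s(B g, Y g) else g) '' M

lemma edgeVerts_insert (e : Sym2 V) (N : Set (Sym2 V)) :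
    edgeVerts (insert e N) = {v | v ∈ e} ∪ edgeVerts N := by
  ext v
  simp only [edgeVerts, Set.mem_insert_iff, Set.mem_setOf_eq, Set.mem_union]
  constructor
  · rintro ⟨f, rfl | hf, hvf⟩
    · exact Or.inl hvf
    · exact Or.inr ⟨f, hf, hvf⟩
  · rintro (hv | ⟨f, hf, hvf⟩)
    · exact ⟨e, Or.inl rfl, hv⟩
    · exact ⟨f, Or.inr hf, hvf⟩

lemma setOf_mem_sym2 (a b : V) : {v | v ∈ s(a,b)} = ({a, b} : Set V) := by
  ext v; simp [Sym2.mem_iff]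

lemma edgeVerts_ncard_le [Fintype V] (N : Set (Sym2 V)) :
    (edgeVerts N).ncard ≤ 2 * N.ncard := by
  refine Set.Finite.induction_on (motive := fun N _ => (edgeVerts N).ncard ≤ 2 * N.ncard) N (Set.toFinite N) (by simp [edgeVerts]) ?_
  intro e N' heN' hN' ih
  rw [edgeVerts_insert, Set.ncard_insert_of_notMem heN' hN']
  refine le_trans (Set.ncard_union_le _ _) ?_
  have h2 : ({v | v ∈ e} : Set V).ncard ≤ 2 := by
    induction e using Sym2.ind with
    | _ a b =>
      rw [setOf_mem_sym2]
      exact le_trans (Set.ncard_insert_le _ _) (by simp)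
  omega

lemma two_ncard_le_edgeVerts [Fintype V] {N : Set (Sym2 V)}
    (h1 : ∀ e ∈ N, ¬e.IsDiag) (h2 : NoSharedVertex N) :
    2 * N.ncard ≤ (edgeVerts N).ncard := by
  revert h1 h2
  refine Set.Finite.induction_on (motive := fun N _ => (∀ e ∈ N, ¬e.IsDiag) → NoSharedVertex N → 2 * N.ncard ≤ (edgeVerts N).ncard) N (Set.toFinite N) (by simp) ?_
  intro e N' heN' hN' ih h1 h2
  rw [edgeVerts_insert, Set.ncard_insert_of_notMem heN' hN']
  have hdisj : Disjoint {v | v ∈ e} (edgeVerts N') := by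
    rw [Set.disjoint_left]
    rintro v hve ⟨f, hf, hvf⟩
    have hne : e ≠ f := fun h => heN' (h ▸ hf)
    exact h2 e (Set.mem_insert _ _) f (Set.mem_insert_of_mem _ hf) hne v hve hvf
  rw [Set.ncard_union_eq hdisj (Set.toFinite _) (Set.toFinite _)]
  have hcard : ({v | v ∈ e} : Set V).ncard = 2 := by
    induction e using Sym2.ind with
    | _ a b =>
      rw [setOf_mem_sym2]
      refine Set.ncard_pair ?_
      intro hab
      exact h1 _ (Set.mem_insert _ _) (by simp [hab])
  have ih' : 2 * N'.ncard ≤ (edgeVerts N').ncard := by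
    refine ih (fun f hf => h1 f (Set.mem_insert_of_mem _ hf)) ?_
    intro f hf f' hf' hne v hvf
    exact h2 f (Set.mem_insert_of_mem _ hf) f' (Set.mem_insert_of_mem _ hf') hne v hvf
  omega

/-- A perfect matching on a dominating set is an ev-dominating set. -/
lemma pm_evdom {G : SimpleGraph V} {D : Set V} {N : Set (Sym2 V)}
    (hdom : IsDomSet G D) (hpm : IsPMOn G D N) : IsEvDomSet G N := by
  refine ⟨hpm.1, fun v => ?_⟩
  by_cases hv : v ∈ D
  · obtain ⟨e, ⟨heN, hve⟩, -⟩ := hpm.2.2 v hv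
    exact ⟨e, heN, Or.inl hve⟩
  · obtain ⟨u, huD, hadj⟩ := hdom v hv
    obtain ⟨e, ⟨heN, hue⟩, -⟩ := hpm.2.2 u huD
    exact ⟨e, heN, Or.inr ⟨u, hue, hadj⟩⟩

lemma pm_noshared {G : SimpleGraph V} {D : Set V} {N : Set (Sym2 V)}
    (hpm : IsPMOn G D N) : NoSharedVertex N := by
  intro e he f hf hne v hve hvf
  have hvD : v ∈ D := hpm.2.1 e he v hve
  obtain ⟨w, -, huni⟩ := hpm.2.2 v hvD
  exact hne ((huni e ⟨he, hve⟩).trans (huni f ⟨hf, hvf⟩).symm)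


section Master

open Classical

variable [Fintype V] {G : SimpleGraph V} {M : Set (Sym2 V)} {A B Y : Sym2 V → V}
  {rep : V → Sym2 V}

/-- Unfold membership in `transf`. -/
lemma mem_transf {e : Sym2 V} :
    e ∈ transf M A B Y rep ↔ ∃ g ∈ M,
      (if g ∈ M ∧ Shares M g ∧ rep (A g) ≠ g then s(B g, Y g) else g) = e := by
  simp only [transf, Set.mem_image]

lemma transf_cases {e : Sym2 V} (he : e ∈ transf M A B Y rep) :
    (e ∈ M ∧ (¬Shares M e ∨ rep (A e) = e)) ∨
      (∃ g ∈ M, Shares M g ∧ rep (A g) ≠ g ∧ e = s(B g, Y g)) := by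
  obtain ⟨g, hg, hψ⟩ := mem_transf.1 he
  by_cases hc : g ∈ M ∧ Shares M g ∧ rep (A g) ≠ g
  · rw [if_pos hc] at hψ
    exact Or.inr ⟨g, hg, hc.2.1, hc.2.2, hψ.symm⟩
  · rw [if_neg hc] at hψ
    subst hψ
    refine Or.inl ⟨hg, ?_⟩
    by_cases hs : Shares M g
    · right
      by_contra hne
      exact hc ⟨hg, hs, hne⟩
    · exact Or.inl hs

lemma mem_transf_of_unmoved {g : Sym2 V} (hg : g ∈ M)
    (h : ¬(Shares M g ∧ rep (A g) ≠ g)) : g ∈ transf M A B Y rep :=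
  mem_transf.2 ⟨g, hg, by rw [if_neg (fun hc => h ⟨hc.2.1, hc.2.2⟩)]⟩

lemma mem_transf_of_moved {g : Sym2 V} (hg : g ∈ M) (hs : Shares M g)
    (h : rep (A g) ≠ g) : s(B g, Y g) ∈ transf M A B Y rep :=
  mem_transf.2 ⟨g, hg, by rw [if_pos ⟨hg, hs, h⟩]⟩

lemma B_mem {g : Sym2 V} (hABY : GoodData G M A B Y) (hg : g ∈ M)
    (hs : Shares M g) : B g ∈ g := by
  have h : B g ∈ s(A g, B g) := Sym2.mem_mk_right _ _
  rwa [← (hABY g hg hs).1] at h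

lemma A_mem {g : Sym2 V} (hABY : GoodData G M A B Y) (hg : g ∈ M)
    (hs : Shares M g) : A g ∈ g := by
  have h : A g ∈ s(A g, B g) := Sym2.mem_mk_left _ _
  rwa [← (hABY g hg hs).1] at h

lemma Y_evdom {g : Sym2 V} (hABY : GoodData G M A B Y) (hg : g ∈ M)
    (hs : Shares M g) : EvDom G g (Y g) :=
  Or.inr ⟨B g, B_mem hABY hg hs, (hABY g hg hs).2.2.1⟩

lemma Y_injOn {g h : Sym2 V} (hABY : GoodData G M A B Y) (hg : g ∈ M)
    (hsg : Shares M g) (hh : h ∈ M) (hsh : Shares M h) (hne : h ≠ g) :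
    Y g ≠ Y h := by
  intro heq
  exact (hABY g hg hsg).2.2.2.2.1 h hh hne (heq ▸ Y_evdom hABY hh hsh)

lemma rep_spec (hABY : GoodData G M A B Y)
    (hrep : ∀ a, SharedV M a → rep a ∈ M ∧ a ∈ rep a) {a : V} (ha : SharedV M a) :
    rep a ∈ M ∧ a ∈ rep a ∧ Shares M (rep a) ∧ A (rep a) = a := by
  obtain ⟨hrM, harep⟩ := hrep a ha
  obtain ⟨g', hg', h', hh', hne, hag', hah'⟩ := ha
  have hshr : Shares M (rep a) := by
    by_cases hgr : g' = rep a
    · exact ⟨h', hh', fun he => hne (hgr.trans he.symm), a, harep, hah'⟩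
    · exact ⟨g', hg', hgr, a, harep, hag'⟩
  refine ⟨hrM, harep, hshr, ?_⟩
  obtain ⟨heq, hBpriv, -⟩ := hABY (rep a) hrM hshr
  have : a = A (rep a) ∨ a = B (rep a) := by
    rw [heq] at harep; exact Sym2.mem_iff.1 harep
  rcases this with h | h
  · exact h.symm
  · exfalso
    by_cases hgr : g' = rep a
    · have hne' : h' ≠ rep a := fun he => hne (hgr.trans he.symm)
      exact hBpriv h' hh' hne' (h ▸ hah')
    · exact hBpriv g' hg' hgr (h ▸ hag')

lemma transf_noshared (hM : IsMinEvDomSet G M) (hABY : GoodData G M A B Y)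
    (hrep : ∀ a, SharedV M a → rep a ∈ M ∧ a ∈ rep a) :
    NoSharedVertex (transf M A B Y rep) := by
  intro e he f hf hnef v hve hvf
  rcases transf_cases he with ⟨heM, hef⟩ | ⟨g, hgM, hgs, hgr, rfl⟩
  · rcases transf_cases hf with ⟨hfM, hff⟩ | ⟨g, hgM, hgs, hgr, rfl⟩
    · -- both original edges of M
      have hse : Shares M e := ⟨f, hfM, Ne.symm hnef, v, hve, hvf⟩
      have hsf : Shares M f := ⟨e, heM, hnef, v, hvf, hve⟩
      have hre : rep (A e) = e := hef.resolve_left (fun h => h hse)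
      have hrf : rep (A f) = f := hff.resolve_left (fun h => h hsf)
      have hvAe : v = A e := by
        have := (hABY e heM hse).1
        rw [this] at hve
        rcases Sym2.mem_iff.1 hve with h | h
        · exact h
        · exact absurd hvf ((h ▸ (hABY e heM hse).2.1) f hfM (Ne.symm hnef))
      have hvAf : v = A f := by
        have := (hABY f hfM hsf).1
        rw [this] at hvf
        rcases Sym2.mem_iff.1 hvf with h | h
        · exact h
        · exact absurd hve ((h ▸ (hABY f hfM hsf).2.1) e heM hnef)
      exact hnef (by rw [← hre, ← hvAe, hvAf, hrf])
    · -- e ∈ M, f = s(B g, Y g)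
      have hYout := (hABY g hgM hgs).2.2.2.1
      rcases Sym2.mem_iff.1 hvf with rfl | rfl
      · -- v = B g
        have hne : e ≠ g := by
          rintro rfl
          rcases hef with h | h
          · exact h hgs
          · exact hgr h
        exact (hABY g hgM hgs).2.1 e heM hne hve
      · exact hYout ⟨e, heM, hve⟩
  · rcases transf_cases hf with ⟨hfM, hff⟩ | ⟨g', hgM', hgs', hgr', rfl⟩
    · have hYout := (hABY g hgM hgs).2.2.2.1
      rcases Sym2.mem_iff.1 hve with rfl | rfl
      · have hne : f ≠ g := by
          rintro rfl
          rcases hff with h | h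
          · exact h hgs
          · exact hgr h
        exact (hABY g hgM hgs).2.1 f hfM hne hvf
      · exact hYout ⟨f, hfM, hvf⟩
    · have hne : g ≠ g' := by rintro rfl; exact hnef rfl
      rcases Sym2.mem_iff.1 hve with rfl | rfl
      · rcases Sym2.mem_iff.1 hvf with h | h
        · exact (hABY g hgM hgs).2.1 g' hgM' (Ne.symm hne)
            (h ▸ B_mem hABY hgM' hgs')
        · exact (hABY g' hgM' hgs').2.2.2.1 ⟨g, hgM, h ▸ B_mem hABY hgM hgs⟩
      · rcases Sym2.mem_iff.1 hvf with h | h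
        · exact (hABY g hgM hgs).2.2.2.1 ⟨g', hgM', h ▸ B_mem hABY hgM' hgs'⟩
        · exact Y_injOn hABY hgM hgs hgM' hgs' (Ne.symm hne) h

lemma edgeVerts_subset_transf (hABY : GoodData G M A B Y)
    (hrep : ∀ a, SharedV M a → rep a ∈ M ∧ a ∈ rep a) :
    edgeVerts M ⊆ edgeVerts (transf M A B Y rep) := by
  rintro v ⟨g, hgM, hvg⟩
  by_cases hc : Shares M g ∧ rep (A g) ≠ g
  · obtain ⟨hgs, hgr⟩ := hc
    rw [(hABY g hgM hgs).1] at hvg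
    rcases Sym2.mem_iff.1 hvg with rfl | rfl
    · -- v = A g : use the representative edge
      obtain ⟨hrM, hvrep, hshr, hAr⟩ :=
        rep_spec hABY hrep (hABY g hgM hgs).2.2.2.2.2
      refine ⟨rep (A g), mem_transf_of_unmoved hrM ?_, hvrep⟩
      rintro ⟨-, hrr⟩
      rw [hAr] at hrr
      exact hrr rfl
    · exact ⟨s(B g, Y g), mem_transf_of_moved hgM hgs hgr, Sym2.mem_mk_left _ _⟩
  · exact ⟨g, mem_transf_of_unmoved hgM hc, hvg⟩

lemma transf_subset_edgeSet (hM : IsMinEvDomSet G M) (hABY : GoodData G M A B Y) :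
    transf M A B Y rep ⊆ G.edgeSet := by
  intro e he
  rcases transf_cases he with ⟨heM, -⟩ | ⟨g, hgM, hgs, -, rfl⟩
  · exact hM.1.1 heM
  · exact G.mem_edgeSet.2 (hABY g hgM hgs).2.2.1

lemma master (hM : IsMinEvDomSet G M) (hABY : GoodData G M A B Y)
    (hrep : ∀ a, SharedV M a → rep a ∈ M ∧ a ∈ rep a) :
    IsMinPairedDomSet G (edgeVerts (transf M A B Y rep)) := by
  set N := transf M A B Y rep with hN
  have hns := transf_noshared hM hABY hrep
  have hpm : IsPMOn G (edgeVerts N) N := by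
    refine ⟨transf_subset_edgeSet hM hABY, fun e he v hv => ⟨e, he, hv⟩, ?_⟩
    rintro v ⟨e, he, hve⟩
    refine ⟨e, ⟨he, hve⟩, ?_⟩
    rintro f ⟨hf, hvf⟩
    by_contra hne
    exact hns f hf e he hne v hvf hve
  have hdom : IsDomSet G (edgeVerts N) := by
    intro v hv
    obtain ⟨e, heM, hev⟩ := hM.1.2 v
    rcases hev with hve | ⟨u, hue, hadj⟩
    · exact absurd (edgeVerts_subset_transf hABY hrep ⟨e, heM, hve⟩) hv
    · exact ⟨u, edgeVerts_subset_transf hABY hrep ⟨e, heM, hue⟩, hadj⟩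
  refine ⟨⟨hdom, N, hpm⟩, ?_⟩
  intro D' hD'
  obtain ⟨hdom', N', hpm'⟩ := hD'
  have h1 : M.ncard ≤ N'.ncard := hM.2 N' (pm_evdom hdom' hpm')
  have h2 : N.ncard ≤ M.ncard := by
    rw [hN, transf]
    exact Set.ncard_image_le (Set.toFinite M)
  have h3 : (edgeVerts N).ncard ≤ 2 * N.ncard := edgeVerts_ncard_le N
  have h4 : 2 * N'.ncard ≤ (edgeVerts N').ncard :=
    two_ncard_le_edgeVerts
      (fun e he => G.not_isDiag_of_mem_edgeSet (hpm'.1 he))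
      (pm_noshared hpm')
  have h5 : (edgeVerts N').ncard ≤ D'.ncard := by
    refine Set.ncard_le_ncard ?_ (Set.toFinite D')
    rintro v ⟨e, heN', hve⟩
    exact hpm'.2.1 e heN' v hve
  omega

lemma Y_not_mem_transf (hM : IsMinEvDomSet G M) (hABY : GoodData G M A B Y)
    {g₀ : Sym2 V} (hg₀ : g₀ ∈ M) (hs₀ : Shares M g₀) (hr₀ : rep (A g₀) = g₀) :
    Y g₀ ∉ edgeVerts (transf M A B Y rep) := by
  rintro ⟨e, he, hy⟩
  have hYout := (hABY g₀ hg₀ hs₀).2.2.2.1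
  rcases transf_cases he with ⟨heM, -⟩ | ⟨g, hgM, hgs, hgr, rfl⟩
  · exact hYout ⟨e, heM, hy⟩
  · have hne : g ≠ g₀ := by rintro rfl; exact hgr hr₀
    rcases Sym2.mem_iff.1 hy with h | h
    · exact hYout ⟨g, hgM, h ▸ B_mem hABY hgM hgs⟩
    · exact Y_injOn hABY hg₀ hs₀ hgM hgs hne h

lemma Y_mem_transf {g₀ : Sym2 V} (hg₀ : g₀ ∈ M) (hs₀ : Shares M g₀)
    (hr₀ : rep (A g₀) ≠ g₀) : Y g₀ ∈ edgeVerts (transf M A B Y rep) :=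
  ⟨s(B g₀, Y g₀), mem_transf_of_moved hg₀ hs₀ hr₀, Sym2.mem_mk_right _ _⟩

end Master

theorem stmt7 [Fintype V] (G : SimpleGraph V) (hG : NoIsolated G) (D : Set V)
    (hD : IsMinPairedDomSet G D)
    (huniq : ∀ D' : Set V, IsMinPairedDomSet G D' → D' = D) :
    ∀ M : Set (Sym2 V), IsMinEvDomSet G M → edgeVerts M = D := by
  classical
  intro M hM
  obtain ⟨A, B, Y, hABY⟩ := exists_gooddata hM
  have hrep0ex : ∀ a : V, ∃ e : Sym2 V, SharedV M a → e ∈ M ∧ a ∈ e := by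
    intro a
    by_cases ha : SharedV M a
    · obtain ⟨g', hg', h', hh', hne, hag', hah'⟩ := ha
      exact ⟨g', fun _ => ⟨hg', hag'⟩⟩
    · exact ⟨s(a, a), fun h => absurd h ha⟩
  choose rep0 hrep0 using hrep0ex
  by_cases hsh : ∃ g ∈ M, Shares M g
  · exfalso
    obtain ⟨g₀, hg₀M, hg₀s⟩ := hsh
    have hAg₀ : A g₀ ∈ g₀ := A_mem hABY hg₀M hg₀s
    obtain ⟨g', hg', h', hh', hne, hag', hah'⟩ := (hABY g₀ hg₀M hg₀s).2.2.2.2.2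
    obtain ⟨h₀, hh₀M, hh₀ne, hah₀⟩ :
        ∃ h₀ ∈ M, h₀ ≠ g₀ ∧ A g₀ ∈ h₀ := by
      by_cases hgg : g' = g₀
      · exact ⟨h', hh', fun he => hne (hgg.trans he.symm), hah'⟩
      · exact ⟨g', hg', hgg, hag'⟩
    set rep1 := Function.update rep0 (A g₀) g₀ with hrep1def
    set rep2 := Function.update rep0 (A g₀) h₀ with hrep2def
    have hrep1 : ∀ a, SharedV M a → rep1 a ∈ M ∧ a ∈ rep1 a := by
      intro a ha
      by_cases haa : a = A g₀
      · subst haa; rw [hrep1def, Function.update_self]; exact ⟨hg₀M, hAg₀⟩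
      · rw [hrep1def, Function.update_of_ne haa]; exact hrep0 a ha
    have hrep2 : ∀ a, SharedV M a → rep2 a ∈ M ∧ a ∈ rep2 a := by
      intro a ha
      by_cases haa : a = A g₀
      · subst haa; rw [hrep2def, Function.update_self]; exact ⟨hh₀M, hah₀⟩
      · rw [hrep2def, Function.update_of_ne haa]; exact hrep0 a ha
    have hP1 := huniq _ (master hM hABY hrep1)
    have hP2 := huniq _ (master hM hABY hrep2)
    have hy1 : Y g₀ ∉ edgeVerts (transf M A B Y rep1) :=
      Y_not_mem_transf hM hABY hg₀M hg₀s (by rw [hrep1def, Function.update_self])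
    have hy2 : Y g₀ ∈ edgeVerts (transf M A B Y rep2) :=
      Y_mem_transf hg₀M hg₀s
        (by rw [hrep2def, Function.update_self]; exact hh₀ne)
    rw [hP1] at hy1
    rw [hP2] at hy2
    exact hy1 hy2
  · push_neg at hsh
    have htr : transf M A B Y rep0 = M := by
      ext e
      rw [mem_transf]
      constructor
      · rintro ⟨g, hg, hψ⟩
        rw [if_neg (fun hc => hsh g hg hc.2.1)] at hψ
        exact hψ ▸ hg
      · intro he
        exact ⟨e, he, by rw [if_neg (fun hc => hsh e he hc.2.1)]⟩
    have hmin := master hM hABY hrep0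
    rw [htr] at hmin
    exact huniq _ hmin
end

section
/- Let T be a finite tree with at least two vertices. If M is the unique minimum ev-dominating set of T, then T has a unique minimum paired-dominating set, namely V_T(M). -/
open SimpleGraph

variable {V : Type*}

section Aux

variable {V : Type*}

lemma evdom_of_pm {G : SimpleGraph V} {D : Set V} {M : Set (Sym2 V)}
    (hD : IsDomSet G D) (hpm : IsPMOn G D M) : IsEvDomSet G M := by
  refine ⟨hpm.1, fun v => ?_⟩
  by_cases hv : v ∈ D
  · obtain ⟨e, ⟨heM, hve⟩, -⟩ := hpm.2.2 v hv
    exact ⟨e, heM, Or.inl hve⟩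
  · obtain ⟨u, huD, huv⟩ := hD v hv
    obtain ⟨e, ⟨heM, hue⟩, -⟩ := hpm.2.2 u huD
    exact ⟨e, heM, Or.inr ⟨u, hue, huv⟩⟩

lemma pm_noShared {G : SimpleGraph V} {D : Set V} {M : Set (Sym2 V)}
    (hpm : IsPMOn G D M) : NoSharedVertex M := by
  intro e he f hf hef v hve hvf
  have hvD : v ∈ D := hpm.2.1 e he v hve
  obtain ⟨g, hg, hguniq⟩ := hpm.2.2 v hvD
  exact hef ((hguniq e ⟨he, hve⟩).trans (hguniq f ⟨hf, hvf⟩).symm)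

lemma pm_edgeVerts {G : SimpleGraph V} {D : Set V} {M : Set (Sym2 V)}
    (hpm : IsPMOn G D M) : edgeVerts M = D := by
  ext v
  constructor
  · rintro ⟨e, he, hve⟩; exact hpm.2.1 e he v hve
  · intro hv; obtain ⟨e, ⟨he, hve⟩, -⟩ := hpm.2.2 v hv; exact ⟨e, he, hve⟩

lemma card_edgeVerts [Fintype V] {M : Set (Sym2 V)}
    (hdiag : ∀ e ∈ M, ¬ e.IsDiag) (hns : NoSharedVertex M) :
    (edgeVerts M).ncard = 2 * M.ncard := by
  classical
  have hfin : M.Finite := Set.toFinite M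
  revert hdiag hns
  refine Set.Finite.induction_on (motive := fun M _ => (∀ e ∈ M, ¬e.IsDiag) → NoSharedVertex M → (edgeVerts M).ncard = 2 * M.ncard) M hfin (fun _ _ => by simp [edgeVerts]) ?_
  rintro e M heM hMfin ih hdiag hns
  · obtain ⟨⟨a, b⟩, rfl⟩ := e.exists_rep
    have hab : a ≠ b := by
      have := hdiag _ (Set.mem_insert _ _)
      simpa [Sym2.mk_isDiag_iff] using this
    have h1 : edgeVerts (insert s(a, b) M) = ({a, b} : Set V) ∪ edgeVerts M := by
      ext v
      constructor
      · rintro ⟨f, hf, hvf⟩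
        rcases hf with rfl | hf
        · left; simpa [Sym2.mem_iff] using hvf
        · right; exact ⟨f, hf, hvf⟩
      · rintro (hv | ⟨f, hf, hvf⟩)
        · exact ⟨s(a, b), Set.mem_insert _ _, by simpa [Sym2.mem_iff] using hv⟩
        · exact ⟨f, Set.mem_insert_of_mem _ hf, hvf⟩
    have hdisj : Disjoint ({a, b} : Set V) (edgeVerts M) := by
      rw [Set.disjoint_left]
      rintro v hv ⟨f, hf, hvf⟩
      have hne : s(a, b) ≠ f := by rintro rfl; exact heM hf
      exact hns _ (Set.mem_insert _ _) f (Set.mem_insert_of_mem _ hf) hne v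
        (by simpa [Sym2.mem_iff] using hv) hvf
    have ih' := ih (fun f hf => hdiag f (Set.mem_insert_of_mem _ hf))
      (fun f hf g hg hfg v hvf => hns f (Set.mem_insert_of_mem _ hf)
        g (Set.mem_insert_of_mem _ hg) hfg v hvf)
    rw [h1, Set.ncard_union_eq hdisj (Set.toFinite _) (Set.toFinite _),
      Set.ncard_pair hab, ih', Set.ncard_insert_of_notMem heM hMfin]
    ring

lemma matching_of_uniqueMin [Fintype V] {G : SimpleGraph V} {M : Set (Sym2 V)}
    (hM : IsMinEvDomSet G M)
    (huniq : ∀ M' : Set (Sym2 V), IsMinEvDomSet G M' → M' = M) :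
    NoSharedVertex M := by
  classical
  intro e he f hf hef v hve hvf
  obtain ⟨u, rfl⟩ := Sym2.mem_iff_exists.1 hve
  have hadj : G.Adj v u := hM.1.1 he
  have hfe : f ≠ s(v, u) := hef.symm
  have hrepl : ∀ M₂ : Set (Sym2 V), IsEvDomSet G M₂ → M₂.ncard ≤ M.ncard → M₂ ≠ M → False := by
    intro M₂ hev hle hne
    exact hne (huniq M₂ ⟨hev, fun M'' h'' => hle.trans (hM.2 M'' h'')⟩)
  by_cases hleaf : ∃ u', G.Adj u u' ∧ u' ≠ v
  · obtain ⟨u', huu', hu'v⟩ := hleaf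
    have he'edge : s(u, u') ∈ G.edgeSet := huu'
    have he'ne : s(u, u') ≠ s(v, u) := by
      intro h
      have : v ∈ s(u, u') := h ▸ Sym2.mem_mk_left v u
      rcases Sym2.mem_iff.1 this with rfl | rfl
      · exact hadj.ne rfl
      · exact hu'v rfl
    have hcov : ∀ x, EvDom G (s(v, u)) x → EvDom G f x ∨ EvDom G (s(u, u')) x := by
      intro x hx
      rcases hx with hx | ⟨y, hy, hyx⟩
      · rcases Sym2.mem_iff.1 hx with rfl | rfl
        · exact Or.inl (Or.inl hvf)
        · exact Or.inr (Or.inl (Sym2.mem_mk_left _ _))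
      · rcases Sym2.mem_iff.1 hy with rfl | rfl
        · exact Or.inl (Or.inr ⟨y, hvf, hyx⟩)
        · exact Or.inr (Or.inr ⟨y, Sym2.mem_mk_left _ _, hyx⟩)
    by_cases he'M : s(u, u') ∈ M
    · have hev : IsEvDomSet G (M \ {s(v, u)}) := by
        refine ⟨fun g hg => hM.1.1 hg.1, fun x => ?_⟩
        obtain ⟨g, hg, hgx⟩ := hM.1.2 x
        by_cases hge : g = s(v, u)
        · subst hge
          rcases hcov x hgx with h | h
          · exact ⟨f, ⟨hf, hfe⟩, h⟩
          · exact ⟨s(u, u'), ⟨he'M, he'ne⟩, h⟩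
        · exact ⟨g, ⟨hg, hge⟩, hgx⟩
      have hlt : (M \ {s(v, u)}).ncard < M.ncard :=
        Set.ncard_diff_singleton_lt_of_mem he (Set.toFinite M)
      have := hM.2 _ hev
      omega
    · have hev : IsEvDomSet G (insert s(u, u') (M \ {s(v, u)})) := by
        constructor
        · rintro g (rfl | hg)
          · exact he'edge
          · exact hM.1.1 hg.1
        · intro x
          obtain ⟨g, hg, hgx⟩ := hM.1.2 x
          by_cases hge : g = s(v, u)
          · subst hge
            rcases hcov x hgx with h | h
            · exact ⟨f, Set.mem_insert_of_mem _ ⟨hf, hfe⟩, h⟩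
            · exact ⟨s(u, u'), Set.mem_insert _ _, h⟩
          · exact ⟨g, Set.mem_insert_of_mem _ ⟨hg, hge⟩, hgx⟩
      have hle : (insert s(u, u') (M \ {s(v, u)})).ncard ≤ M.ncard := by
        have h1 := Set.ncard_insert_le s(u, u') (M \ {s(v, u)})
        have h2 : (M \ {s(v, u)}).ncard = M.ncard - 1 :=
          Set.ncard_diff_singleton_of_mem he
        have h3 : 0 < M.ncard := (Set.ncard_pos (Set.toFinite M)).2 ⟨_, he⟩
        omega
      refine hrepl _ hev hle ?_
      intro hEq
      exact he'M (hEq ▸ Set.mem_insert _ _)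
  · push_neg at hleaf
    have hcov : ∀ x, EvDom G (s(v, u)) x → EvDom G f x := by
      intro x hx
      rcases hx with hx | ⟨y, hy, hyx⟩
      · rcases Sym2.mem_iff.1 hx with rfl | rfl
        · exact Or.inl hvf
        · exact Or.inr ⟨v, hvf, hadj⟩
      · rcases Sym2.mem_iff.1 hy with rfl | rfl
        · exact Or.inr ⟨y, hvf, hyx⟩
        · have : x = v := hleaf x hyx
          subst this
          exact Or.inl hvf
    have hev : IsEvDomSet G (M \ {s(v, u)}) := by
      refine ⟨fun g hg => hM.1.1 hg.1, fun x => ?_⟩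
      obtain ⟨g, hg, hgx⟩ := hM.1.2 x
      by_cases hge : g = s(v, u)
      · subst hge
        exact ⟨f, ⟨hf, hfe⟩, hcov x hgx⟩
      · exact ⟨g, ⟨hg, hge⟩, hgx⟩
    have hlt : (M \ {s(v, u)}).ncard < M.ncard :=
      Set.ncard_diff_singleton_lt_of_mem he (Set.toFinite M)
    have := hM.2 _ hev
    omega

end Aux

theorem stmt10 [Fintype V] (G : SimpleGraph V) (hT : G.IsTree) (h2 : 2 ≤ Fintype.card V)
    (M : Set (Sym2 V)) (hM : IsMinEvDomSet G M)
    (huniq : ∀ M' : Set (Sym2 V), IsMinEvDomSet G M' → M' = M) :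
    IsMinPairedDomSet G (edgeVerts M) ∧
      ∀ D' : Set V, IsMinPairedDomSet G D' → D' = edgeVerts M := by
  classical
  have hns : NoSharedVertex M := matching_of_uniqueMin hM huniq
  have hsub : M ⊆ G.edgeSet := hM.1.1
  have hpm : IsPMOn G (edgeVerts M) M := by
    refine ⟨hsub, fun e he v hv => ⟨e, he, hv⟩, ?_⟩
    rintro v ⟨e, he, hve⟩
    refine ⟨e, ⟨he, hve⟩, ?_⟩
    rintro f ⟨hfM, hvf⟩
    by_contra hne
    exact hns f hfM e he hne v hvf hve
  have hdom : IsDomSet G (edgeVerts M) := by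
    intro x hx
    obtain ⟨e, he, hcov⟩ := hM.1.2 x
    rcases hcov with hxe | ⟨u, hue, hux⟩
    · exact absurd ⟨e, he, hxe⟩ hx
    · exact ⟨u, ⟨e, he, hue⟩, hux⟩
  have hpds : IsPairedDomSet G (edgeVerts M) := ⟨hdom, M, hpm⟩
  have hdiag : ∀ e ∈ M, ¬ e.IsDiag := fun e he => G.not_isDiag_of_mem_edgeSet (hsub he)
  have hcard : (edgeVerts M).ncard = 2 * M.ncard := card_edgeVerts hdiag hns
  have key : ∀ D' : Set V, IsPairedDomSet G D' →
      ∃ M' : Set (Sym2 V), IsEvDomSet G M' ∧ D'.ncard = 2 * M'.ncard ∧ edgeVerts M' = D' := by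
    rintro D' ⟨hdom', M', hpm'⟩
    have hev' := evdom_of_pm hdom' hpm'
    have hns' := pm_noShared hpm'
    have heq := pm_edgeVerts hpm'
    have hdiag' : ∀ e ∈ M', ¬ e.IsDiag := fun e he => G.not_isDiag_of_mem_edgeSet (hpm'.1 he)
    exact ⟨M', hev', by rw [← heq, card_edgeVerts hdiag' hns'], heq⟩
  have hmin : ∀ D', IsPairedDomSet G D' → (edgeVerts M).ncard ≤ D'.ncard := by
    intro D' hD'
    obtain ⟨M', hev', hc', -⟩ := key D' hD'
    have := hM.2 M' hev'
    omega
  refine ⟨⟨hpds, hmin⟩, ?_⟩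
  rintro D' ⟨hD', hD'min⟩
  obtain ⟨M', hev', hc', heq'⟩ := key D' hD'
  have h1 : D'.ncard ≤ (edgeVerts M).ncard := hD'min _ hpds
  have h2 := hM.2 M' hev'
  have hM'card : M'.ncard = M.ncard := by omega
  have hmin' : IsMinEvDomSet G M' :=
    ⟨hev', fun M'' h'' => by rw [hM'card]; exact hM.2 M'' h''⟩
  rw [← heq', huniq M' hmin']
end
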